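/- Let G be a simple graph on a finite vertex set V with |V| = N ≥ 2 and let i, j ∈ V be distinct vertices that are reachable from each other in G. Then there exist an (i,j)-feasible flow f for G and an (i,j)-dual-feasible triple (t,u,v) for G whose values are both equal to dist_G(i,j): Σ_{k,l∈V} f(k,l) = Σ_{{k,l}∈E} u({k,l}) + t(i) − t(j) = dist_G(i,j). (The combined primal–dual constraint system encoding shortest paths is feasible whenever i and j lie in the same component.) -/

import Mathlib

/-- `f : V → V → ℝ` is an `(i,j)`-feasible flow for the simple graph `G`
(a feasible point of the paper's primal shortest-path LP (10)–(14)). -/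
def IsFeasibleFlow {V : Type*} [Fintype V] [DecidableEq V]
    (G : SimpleGraph V) (i j : V) (f : V → V → ℝ) : Prop :=
  (∀ k l, 0 ≤ f k l) ∧
  (∀ k, f k k = 0) ∧
  (∀ k l, G.Adj k l → f k l + f l k ≤ 1) ∧
  (∀ k l, k ≠ l → ¬ G.Adj k l → f k l = 0) ∧
  (∀ k, (∑ l, f k l) - (∑ l, f l k) =
    if k = i then 1 else if k = j then -1 else 0)

/-- `(t, u, v)` is a dual-feasible triple for the simple graph `G`
(a feasible point of the paper's dual shortest-path LP (15)–(19)), where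
`u` and `v` are indexed by unordered pairs `{k,l}` of distinct vertices and
`N - 2 = |V| - 2` is the "big-M" coefficient. -/
def IsDualFeasible {V : Type*} [Fintype V] [DecidableEq V]
    (G : SimpleGraph V) [DecidableRel G.Adj]
    (t : V → ℝ) (u v : Sym2 V → ℝ) : Prop :=
  ∀ k l : V, k ≠ l →
    v s(k, l) + t k - t l ≤ 1 ∧
    v s(k, l) + t l - t k ≤ 1 ∧
    u s(k, l) ≤ v s(k, l) +
      ((Fintype.card V : ℝ) - 2) * (1 - if G.Adj k l then 1 else 0) ∧
    u s(k, l) ≤ 0 ∧ v s(k, l) ≤ 0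

/-- The objective value of the dual triple `(t, u, v)` for the vertex pair
`(i, j)`: `∑_{{k,l}∈E} u {k,l} + t i - t j`, the sum running over all
unordered pairs of distinct vertices. -/
def dualValue {V : Type*} [Fintype V] [DecidableEq V]
    (t : V → ℝ) (u : Sym2 V → ℝ) (i j : V) : ℝ :=
  (∑ e ∈ Finset.univ.filter (fun e : Sym2 V => ¬ e.IsDiag), u e) + t i - t j


open Finset SimpleGraph

lemma flow_of_path {V : Type*} [Fintype V] [DecidableEq V]
    (G : SimpleGraph V) {i j : V} (q : G.Walk i j) (hq : q.IsPath) :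
    ∃ f : V → V → ℝ,
      (∀ k l, 0 ≤ f k l) ∧
      (∀ k l, f k l + f l k ≤ 1) ∧
      (∀ k l, ¬ G.Adj k l → f k l = 0) ∧
      (∀ k, (∑ l, f k l) - (∑ l, f l k) =
        (if k = i then (1:ℝ) else 0) - (if k = j then 1 else 0)) ∧
      (∀ k l, f k l ≠ 0 → k ∈ q.support ∧ l ∈ q.support) ∧
      (∑ k, ∑ l, f k l) = q.length := by
  induction q with
  | nil => exact ⟨0, by simp, by simp, by simp, by simp, by simp, by simp⟩
  | @cons i b j h q ih =>
    rw [SimpleGraph.Walk.cons_isPath_iff] at hq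
    obtain ⟨f, hf0, hfc, hfa, hcons, hsupp, hsum⟩ := ih hq.1
    have hib : ∀ l, f i l = 0 := by
      intro l; by_contra hne
      exact hq.2 (hsupp i l hne).1
    have hbi : ∀ k, f k i = 0 := by
      intro k; by_contra hne
      exact hq.2 (hsupp k i hne).2
    have hbne : b ≠ i := fun e => hq.2 (e ▸ q.start_mem_support)
    have e1 : ∀ k, (∑ l, (f k l + if k = i then (if l = b then (1:ℝ) else 0) else 0))
        = (∑ l, f k l) + (if k = i then 1 else 0) := by
      intro k
      rw [Finset.sum_add_distrib]
      congr 1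
      split_ifs with hk <;> simp
    have e2 : ∀ k, (∑ l, (f l k + if l = i then (if k = b then (1:ℝ) else 0) else 0))
        = (∑ l, f l k) + (if k = b then 1 else 0) := by
      intro k
      rw [Finset.sum_add_distrib]
      congr 1
      simp
    refine ⟨fun k l => f k l + (if k = i then (if l = b then 1 else 0) else 0),
      ?_, ?_, ?_, ?_, ?_, ?_⟩
    · intro k l
      dsimp only
      have := hf0 k l; positivity
    · intro k l
      dsimp only
      by_cases hk : k = i
      · subst hk
        rw [hib l, hbi l]
        split_ifs <;>
          first
          | exact absurd (Eq.symm ‹_ = b›) hbne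
          | norm_num
      · by_cases hl : l = i
        · subst hl
          rw [hbi k, hib k]
          split_ifs <;>
            first
            | exact absurd ‹k = i› hk
            | norm_num
        · rw [if_neg hk, if_neg hl, add_zero, add_zero]
          exact hfc k l
    · intro k l hadj
      dsimp only
      rw [hfa k l hadj]
      split_ifs with h2 h3
      · subst h2 h3; exact absurd h hadj
      · simp
      · simp
    · intro k
      rw [e1 k, e2 k]
      linarith [hcons k]
    · intro k l hne
      dsimp only at hne
      by_cases hfkl : f k l = 0
      · rw [hfkl, zero_add] at hne
        have hki : k = i := by by_contra hc; rw [if_neg hc] at hne; exact hne rfl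
        have hlb : l = b := by
          rw [if_pos hki] at hne
          by_contra hc; rw [if_neg hc] at hne; exact hne rfl
        subst hki; subst hlb
        exact ⟨Walk.start_mem_support _, by
          rw [Walk.support_cons]; exact List.mem_cons_of_mem _ q.start_mem_support⟩
      · have := hsupp k l hfkl
        rw [Walk.support_cons]
        exact ⟨List.mem_cons_of_mem _ this.1, List.mem_cons_of_mem _ this.2⟩
    · rw [Walk.length_cons]
      push_cast
      simp_rw [e1]
      rw [Finset.sum_add_distrib, hsum]
      simp


/-- **Feasibility of the combined primal–dual shortest-path system.**  If
`|V| = N ≥ 2` and `i ≠ j` are reachable from each other in `G`, then there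
exist an `(i,j)`-feasible flow `f` for `G` and an `(i,j)`-dual-feasible
triple `(t,u,v)` for `G` whose values are both equal to the graph distance
`dist_G(i,j)`. -/
theorem shortestPath_primal_dual_feasible {V : Type*} [Fintype V] [DecidableEq V]
    (G : SimpleGraph V) [DecidableRel G.Adj] (hN : 2 ≤ Fintype.card V)
    (i j : V) (hij : i ≠ j) (hreach : G.Reachable i j) :
    ∃ (f : V → V → ℝ) (t : V → ℝ) (u v : Sym2 V → ℝ),
      IsFeasibleFlow G i j f ∧ IsDualFeasible G t u v ∧
      (∑ k, ∑ l, f k l) = (G.dist i j : ℝ) ∧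
      dualValue t u i j = (G.dist i j : ℝ) := by
  classical
  obtain ⟨p, hp, hlen⟩ := hreach.exists_path_of_dist
  obtain ⟨f, hf0, hfc, hfa, hcons, -, hsum⟩ := flow_of_path G p hp
  set t : V → ℝ := fun k => if G.Reachable i k then -(G.dist i k : ℝ) else 0 with ht
  have hcard : (2:ℝ) ≤ (Fintype.card V : ℝ) := by exact_mod_cast hN
  have hdistlt : ∀ k, G.Reachable i k → (G.dist i k : ℝ) ≤ (Fintype.card V : ℝ) - 1 := by
    intro k hk
    obtain ⟨p', hp', hl'⟩ := hk.exists_path_of_dist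
    have := hp'.length_lt
    have : G.dist i k < Fintype.card V := hl' ▸ this
    have : G.dist i k ≤ Fintype.card V - 1 := by omega
    have h2 : ((G.dist i k : ℕ) : ℝ) ≤ ((Fintype.card V - 1 : ℕ) : ℝ) := by exact_mod_cast this
    calc (G.dist i k : ℝ) ≤ ((Fintype.card V - 1 : ℕ) : ℝ) := h2
      _ ≤ (Fintype.card V : ℝ) - 1 := by
          have : (1:ℕ) ≤ Fintype.card V := by omega
          push_cast [this]
          ring_nf
          exact le_refl _
  have htle : ∀ k, t k ≤ 0 := by
    intro k
    rw [ht]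
    dsimp only
    split_ifs with h
    · simp [neg_nonpos]
    · exact le_refl 0
  have htge : ∀ k, -((Fintype.card V : ℝ) - 1) ≤ t k := by
    intro k
    rw [ht]; dsimp only
    split_ifs with h
    · have := hdistlt k h; linarith
    · linarith
  have htadj : ∀ k l, G.Adj k l → |t k - t l| ≤ 1 := by
    intro k l hadj
    by_cases hk : G.Reachable i k
    · have hl : G.Reachable i l := hk.trans hadj.reachable
      rw [ht]; dsimp only
      rw [if_pos hk, if_pos hl]
      have h1 : G.dist i l ≤ G.dist i k + 1 := by
        obtain ⟨w, hw⟩ := hk.exists_walk_length_eq_dist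
        have := SimpleGraph.dist_le (w.concat hadj)
        rwa [SimpleGraph.Walk.length_concat, hw] at this
      have h2 : G.dist i k ≤ G.dist i l + 1 := by
        obtain ⟨w, hw⟩ := hl.exists_walk_length_eq_dist
        have := SimpleGraph.dist_le (w.concat hadj.symm)
        rwa [SimpleGraph.Walk.length_concat, hw] at this
      rw [abs_le]
      constructor
      · have : (G.dist i k : ℝ) ≤ (G.dist i l : ℝ) + 1 := by exact_mod_cast h2
        linarith
      · have : (G.dist i l : ℝ) ≤ (G.dist i k : ℝ) + 1 := by exact_mod_cast h1
        linarith
    · have hl : ¬ G.Reachable i l := fun hl => hk (hl.trans hadj.symm.reachable)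
      rw [ht]; dsimp only
      rw [if_neg hk, if_neg hl]
      norm_num
  have habs : ∀ k l, |t k - t l| ≤ (Fintype.card V : ℝ) - 1 := by
    intro k l
    rw [abs_le]
    have := htle k; have := htle l; have := htge k; have := htge l
    constructor <;> linarith
  refine ⟨f, t, 0,
    Sym2.lift ⟨fun k l => min 0 (1 - |t k - t l|), fun k l => by dsimp only; rw [abs_sub_comm]⟩,
    ⟨hf0, fun k => hfa k k (G.loopless.irrefl k), fun k l _ => hfc k l,
      fun k l _ h => hfa k l h, ?_⟩, ?_, ?_, ?_⟩
  · intro k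
    rw [hcons k]
    by_cases hk : k = i
    · subst hk; rw [if_pos rfl, if_pos rfl, if_neg hij]; norm_num
    · rw [if_neg hk, if_neg hk]
      by_cases hkj : k = j <;> simp [hkj]
  · intro k l hkl
    rw [Sym2.lift_mk]
    dsimp only
    have hv1 : min 0 (1 - |t k - t l|) ≤ 1 - |t k - t l| := min_le_right _ _
    have hv0 : min 0 (1 - |t k - t l|) ≤ 0 := min_le_left _ _
    have ha1 : t k - t l ≤ |t k - t l| := le_abs_self _
    have ha2 : t l - t k ≤ |t k - t l| := by rw [abs_sub_comm]; exact le_abs_self _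
    refine ⟨by linarith, by linarith, ?_, le_refl 0, hv0⟩
    by_cases hadj : G.Adj k l
    · rw [if_pos hadj]
      have := htadj k l hadj
      have : (0:ℝ) ≤ min 0 (1 - |t k - t l|) := le_min (le_refl 0) (by linarith)
      simp only [Pi.zero_apply]
      linarith
    · rw [if_neg hadj]
      have := habs k l
      have h1 : (2:ℝ) - (Fintype.card V : ℝ) ≤ min 0 (1 - |t k - t l|) :=
        le_min (by linarith) (by linarith)
      simp only [Pi.zero_apply]
      nlinarith
  · rw [hsum, hlen]
  · rw [dualValue]
    simp only [Pi.zero_apply, Finset.sum_const_zero, zero_add]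
    rw [ht]; dsimp only
    rw [if_pos ((SimpleGraph.Reachable.refl i : G.Reachable i i)), if_pos hreach]
    simp [SimpleGraph.dist_self]
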